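/- If the π-join M₁(A) of a DSRG with parameters (n,k,t,λ,μ) and homogeneous partition with a cells of size b (ab = n) is a DSRG, then 2k + μ − λ = aμ + b. -/
import Mathlib


open Matrix

/-- The all-ones matrix. -/
def onesMat (n : ℕ) : Matrix (Fin n) (Fin n) ℝ := Matrix.of fun _ _ => 1

/-- The all-ones matrix indexed by blocks. -/
def Jbig (N n : ℕ) : Matrix (Fin N × Fin n) (Fin N × Fin n) ℝ := Matrix.of fun _ _ => 1

/-- `Ublk a b i`: columns in the `i`-th cell are all-ones, other entries zero. -/
def Ublk (a b : ℕ) (i : ℕ) : Matrix (Fin (a * b)) (Fin (a * b)) ℝ :=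
  Matrix.of fun _ c => if (c : ℕ) / b = i then 1 else 0

/-- The π-join of `A` in power `j`: the block-circulant matrix of block order
`j*a+1` whose first block-row is `(A, U₁,…,U₁, U₂,…,U₂, …, U_a,…,U_a)`,
each `Uᵢ` repeated `j` times. -/
def Mjoin (a b j : ℕ) (A : Matrix (Fin (a * b)) (Fin (a * b)) ℝ) :
    Matrix (Fin (j * a + 1) × Fin (a * b)) (Fin (j * a + 1) × Fin (a * b)) ℝ :=
  fun p q =>
    if q.1 - p.1 = 0 then A p.2 q.2
    else Ublk a b ((((q.1 - p.1 : Fin (j * a + 1)) : ℕ) - 1) / j) p.2 q.2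

/-- Summing the indicator of the `i`-th cell over all `a*b` columns gives `b`. -/
lemma pijoin_sum_ind (a b : ℕ) (hb : 0 < b) (i : ℕ) (hi : i < a) :
    ∑ w : Fin (a*b), (if (w:ℕ)/b = i then (1:ℝ) else 0) = b := by
  rw [Fin.sum_univ_eq_sum_range (fun c => if c/b = i then (1:ℝ) else 0)]
  rw [← Finset.sum_filter]
  have hf : (Finset.range (a*b)).filter (fun c => c/b = i) = Finset.Ico (i*b) ((i+1)*b) := by
    ext c
    simp only [Finset.mem_filter, Finset.mem_range, Finset.mem_Ico]
    constructor
    · rintro ⟨hc, rfl⟩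
      exact ⟨Nat.div_mul_le_self c b, (Nat.div_lt_iff_lt_mul hb).mp (Nat.lt_succ_self _)⟩
    · rintro ⟨h1, h2⟩
      have hi1 : c/b < i+1 := (Nat.div_lt_iff_lt_mul hb).mpr h2
      have hi2 : i ≤ c/b := (Nat.le_div_iff_mul_le hb).mpr h1
      have : c < a*b := lt_of_lt_of_le h2 (Nat.mul_le_mul_right b hi)
      omega
  rw [hf, Finset.sum_const, Nat.card_Ico]
  have : (i+1)*b - i*b = b := by rw [Nat.succ_mul]; omega
  rw [this]; simp

lemma pijoin_coe_zero_sub (n : ℕ) (z : Fin (n+1)) (hz : z ≠ 0) :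
    ((0 - z : Fin (n+1)) : ℕ) = n+1 - (z:ℕ) := by
  have hzv : 0 < (z:ℕ) := Nat.pos_of_ne_zero (fun h => hz (Fin.ext (by simpa using h)))
  have := z.isLt
  rw [Fin.sub_def]
  simp only [Fin.val_zero, Nat.zero_add]
  exact Nat.mod_eq_of_lt (by omega)

/-- Every row of the π-join `M₁(A)` sums to `k + a*b`. -/
lemma pijoin_Mrow (a b k : ℕ) (ha : 0 < a) (hb : 0 < b)
    (A : Matrix (Fin (a * b)) (Fin (a * b)) ℝ)
    (hrow : ∀ u : Fin (a*b), ∑ w, A u w = (k:ℝ))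
    (p : Fin (1*a+1) × Fin (a*b)) :
    ∑ q, Mjoin a b 1 A p q = (k:ℝ) + (a:ℝ)*(b:ℝ) := by
  obtain ⟨x,u⟩ := p
  rw [Fintype.sum_prod_type]
  have step : ∀ z : Fin (1*a+1), (∑ w, Mjoin a b 1 A (x,u) (z,w))
      = if z = x then (k:ℝ) else b := by
    intro z
    by_cases hz : z = x
    · subst hz
      simp only [Mjoin, sub_self, if_pos rfl, if_pos (rfl : z = z)]
      simpa using hrow u
    · have hzx : z - x ≠ 0 := sub_ne_zero.mpr hz
      have h1 : 1 ≤ ((z - x : Fin (1*a+1)) : ℕ) :=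
        Nat.pos_of_ne_zero (fun h => hzx (Fin.ext (by simpa using h)))
      have h2 : ((z - x : Fin (1*a+1)) : ℕ) < 1*a+1 := (z-x).isLt
      have hthis : ∀ w : Fin (a*b), Mjoin a b 1 A (x,u) (z,w)
          = (if (w:ℕ)/b = ((z-x : Fin (1*a+1)):ℕ) - 1 then (1:ℝ) else 0) := by
        intro w; simp [Mjoin, Ublk, hzx, Nat.div_one]
      rw [Finset.sum_congr rfl (fun w _ => hthis w), pijoin_sum_ind a b hb _ (by omega)]
      simp [hz]
  rw [Finset.sum_congr rfl (fun z _ => step z)]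
  have h2 : ∀ z : Fin (1*a+1), (if z = x then (k:ℝ) else b)
      = b + (if z = x then (k:ℝ) - b else 0) := by
    intro z; split <;> ring
  rw [Finset.sum_congr rfl (fun z _ => h2 z), Finset.sum_add_distrib, Finset.sum_const,
    Finset.sum_ite_eq' Finset.univ x (fun _ => (k:ℝ) - b)]
  simp [nsmul_eq_mul]
  ring

/-- The diagonal-block entries of `M₁(A)²` equal those of `A² + b·J`. -/
lemma pijoin_Msq (a b : ℕ) (ha : 0 < a) (hb : 0 < b)
    (A : Matrix (Fin (a * b)) (Fin (a * b)) ℝ) (u v : Fin (a*b)) :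
    ∑ r, Mjoin a b 1 A (0,u) r * Mjoin a b 1 A r (0,v)
      = (∑ w, A u w * A w v) + b := by
  rw [Fintype.sum_prod_type]
  set d := (v:ℕ)/b with hd
  have hv : d < a := (Nat.div_lt_iff_lt_mul hb).mpr v.isLt
  set z0 : Fin (1*a+1) := ⟨1*a - d, Nat.lt_succ_of_le (Nat.sub_le _ _)⟩ with hz0
  have hz0v : (z0 : ℕ) = 1*a - d := rfl
  have hz0ne : z0 ≠ 0 := by
    intro h
    have : (z0 : ℕ) = 0 := by rw [h]; rfl
    rw [hz0v] at this; omega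
  have step : ∀ z : Fin (1*a+1), (∑ w, Mjoin a b 1 A (0,u) (z,w) * Mjoin a b 1 A (z,w) (0,v))
      = (if z = 0 then (∑ w, A u w * A w v) else 0) + (if z = z0 then (b:ℝ) else 0) := by
    intro z
    by_cases hz : z = 0
    · subst hz
      rw [if_pos rfl, if_neg (Ne.symm hz0ne)]
      have h0 : ∀ w : Fin (a*b), Mjoin a b 1 A (0,u) (0,w) * Mjoin a b 1 A (0,w) (0,v)
          = A u w * A w v := by
        intro w; simp [Mjoin]
      rw [Finset.sum_congr rfl (fun w _ => h0 w)]; ring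
    · have hz2 : (0 : Fin (1*a+1)) - z ≠ 0 := fun h => hz (sub_eq_zero.mp h).symm
      have hzv : 1 ≤ (z:ℕ) := Nat.pos_of_ne_zero (fun h => hz (Fin.ext (by simpa using h)))
      have hzlt : (z:ℕ) < 1*a+1 := z.isLt
      have hcoe : ((0 - z : Fin (1*a+1)) : ℕ) = 1*a+1 - (z:ℕ) := pijoin_coe_zero_sub (1*a) z hz
      have hca : (((0 - z : Fin (1*a+1)) : ℕ) - 1) / 1 = 1*a - (z:ℕ) := by
        rw [hcoe]; omega
      have hw : ∀ w : Fin (a*b), Mjoin a b 1 A (0,u) (z,w) * Mjoin a b 1 A (z,w) (0,v)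
          = (if (w:ℕ)/b = (z:ℕ) - 1 then (1:ℝ) else 0) *
            (if d = 1*a - (z:ℕ) then (1:ℝ) else 0) := by
        intro w
        simp only [Mjoin, Ublk, Matrix.of_apply, sub_zero, if_neg hz, if_neg hz2, hca,
          Nat.div_one, ← hd]
      rw [Finset.sum_congr rfl (fun w _ => hw w), ← Finset.sum_mul,
        pijoin_sum_ind a b hb _ (by omega), if_neg hz]
      by_cases hzz : z = z0
      · subst hzz
        rw [if_pos rfl, if_pos (by rw [hz0v]; omega)]
        ring
      · rw [if_neg hzz, if_neg ?_]
        · ring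
        · intro h
          exact hzz (Fin.ext (by rw [hz0v]; omega))
  rw [Finset.sum_congr rfl (fun z _ => step z), Finset.sum_add_distrib,
    Finset.sum_ite_eq' Finset.univ (0 : Fin (1*a+1)) (fun _ => ∑ w, A u w * A w v),
    Finset.sum_ite_eq' Finset.univ z0 (fun _ => (b:ℝ))]
  simp

/-- Corollary 1: if the π-join `M₁(A)` of a DSRG is a DSRG, then
`2k + μ − λ = aμ + b`. -/
theorem pijoin_eq1 (a b k t l m : ℕ) (ha : 0 < a) (hb : 0 < b)
    (A : Matrix (Fin (a * b)) (Fin (a * b)) ℝ)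
    (h01 : ∀ i j, A i j = 0 ∨ A i j = 1)
    (hdiag : ∀ i, A i i = 0)
    (hAJ : A * onesMat (a * b) = (k : ℝ) • onesMat (a * b))
    (hJA : onesMat (a * b) * A = (k : ℝ) • onesMat (a * b))
    (hA2 : A * A = (t : ℝ) • (1 : Matrix (Fin (a * b)) (Fin (a * b)) ℝ) + (l : ℝ) • A
            + (m : ℝ) • (onesMat (a * b) - 1 - A))
    (hlt : l < t) (htk : t < k) (hm0 : 0 < m) (hmt : m ≤ t)
    (ntil ktil ttil ltil mtil : ℕ)
    (hcard : ntil = Fintype.card (Fin (1 * a + 1) × Fin (a * b)))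
    (hMJ : Mjoin a b 1 A * Jbig (1 * a + 1) (a * b)
            = (ktil : ℝ) • Jbig (1 * a + 1) (a * b))
    (hJM : Jbig (1 * a + 1) (a * b) * Mjoin a b 1 A
            = (ktil : ℝ) • Jbig (1 * a + 1) (a * b))
    (hM2 : Mjoin a b 1 A * Mjoin a b 1 A
            = (ttil : ℝ) • (1 : Matrix (Fin (1 * a + 1) × Fin (a * b))
                (Fin (1 * a + 1) × Fin (a * b)) ℝ)
              + (ltil : ℝ) • Mjoin a b 1 A
              + (mtil : ℝ) • (Jbig (1 * a + 1) (a * b) - 1 - Mjoin a b 1 A))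
    (hlttil : ltil < ttil) (htktil : ttil < ktil) (hm0til : 0 < mtil) (hmttil : mtil ≤ ttil) :
    2 * (k : ℝ) + (m : ℝ) - (l : ℝ) = (a : ℝ) * (m : ℝ) + (b : ℝ) := by
  haveI : NeZero (a*b) := ⟨(Nat.mul_pos ha hb).ne'⟩
  -- row sums of A
  have hrow : ∀ u : Fin (a*b), ∑ w, A u w = (k:ℝ) := by
    intro u
    have := congrFun (congrFun hAJ u) (0 : Fin (a*b))
    simpa [Matrix.mul_apply, onesMat] using this
  -- entrywise form of hA2
  have hA2e : ∀ u v : Fin (a*b), ∑ w, A u w * A w v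
      = (t:ℝ) * (if u = v then 1 else 0) + (l:ℝ) * A u v
        + (m:ℝ) * (1 - (if u = v then 1 else 0) - A u v) := by
    intro u v
    have h := congrFun (congrFun hA2 u) v
    simpa [Matrix.mul_apply, Matrix.one_apply, onesMat, Matrix.sub_apply, Matrix.add_apply,
      Matrix.smul_apply, smul_eq_mul] using h
  -- entrywise form of hM2 on the diagonal blocks
  have hM2e : ∀ u v : Fin (a*b),
      ∑ r, Mjoin a b 1 A (0,u) r * Mjoin a b 1 A r (0,v)
        = (ttil:ℝ) * (if u = v then 1 else 0) + (ltil:ℝ) * A u v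
          + (mtil:ℝ) * (1 - (if u = v then 1 else 0) - A u v) := by
    intro u v
    have h := congrFun (congrFun hM2 ((0 : Fin (1*a+1)), u)) ((0 : Fin (1*a+1)), v)
    simp only [Matrix.mul_apply, Matrix.one_apply, Jbig, Matrix.sub_apply, Matrix.add_apply,
      Matrix.smul_apply, smul_eq_mul, Matrix.of_apply, Prod.mk.injEq, true_and] at h
    have hM00 : Mjoin a b 1 A ((0 : Fin (1*a+1)), u) ((0 : Fin (1*a+1)), v) = A u v := by
      simp [Mjoin]
    rw [hM00] at h
    convert h using 3
  -- the key pointwise relation between the parameters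
  have key : ∀ u v : Fin (a*b),
      (t:ℝ) * (if u = v then 1 else 0) + (l:ℝ) * A u v
        + (m:ℝ) * (1 - (if u = v then 1 else 0) - A u v) + b
      = (ttil:ℝ) * (if u = v then 1 else 0) + (ltil:ℝ) * A u v
        + (mtil:ℝ) * (1 - (if u = v then 1 else 0) - A u v) := by
    intro u v
    have h1 := pijoin_Msq a b ha hb A u v
    rw [hM2e u v, hA2e u v] at h1
    linarith [h1]
  -- t-tilde
  have htt : (t:ℝ) + b = ttil := by
    have h := key 0 0
    simp [hdiag 0] at h
    linarith [h]
  -- a vertex w1 with A 0 w1 = 1 and A w1 0 = 0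
  have hAt : ∑ w, A 0 w * A w 0 = (t:ℝ) := by
    have h := hA2e 0 0
    simpa [hdiag 0] using h
  have hex : ∃ w : Fin (a*b), A 0 w = 1 ∧ A w 0 = 0 := by
    by_contra hcon
    push_neg at hcon
    have heq : ∀ w : Fin (a*b), A 0 w * A w 0 = A 0 w := by
      intro w
      rcases h01 0 w with h|h
      · rw [h]; ring
      · rcases h01 w 0 with h'|h'
        · exact absurd h' (hcon w h)
        · rw [h, h']; ring
    have h1 : (t:ℝ) = k := by
      rw [← hAt, Finset.sum_congr rfl (fun w _ => heq w), hrow 0]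
    have h2 : t = k := Nat.cast_injective h1
    omega
  obtain ⟨w1, hw1, hw10⟩ := hex
  have hw1ne : w1 ≠ 0 := by
    intro h; rw [h, hdiag 0] at hw1; norm_num at hw1
  -- l-tilde
  have hll : (l:ℝ) + b = ltil := by
    have h := key 0 w1
    rw [if_neg (fun hh => hw1ne hh.symm), hw1] at h
    linarith [h]
  -- m-tilde
  have hmm : (m:ℝ) + b = mtil := by
    have h := key w1 0
    rw [if_neg hw1ne, hw10] at h
    linarith [h]
  -- identity E1 for A
  have s1 : ∑ v : Fin (a*b), (if (0:Fin (a*b)) = v then (1:ℝ) else 0) = 1 := by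
    rw [Finset.sum_ite_eq]; simp
  have s3 : ∑ _v : Fin (a*b), (1:ℝ) = ((a*b : ℕ) : ℝ) := by
    simp
  have E1 : (k:ℝ)*k = t + l*k + m*(((a*b:ℕ):ℝ) - 1 - k) := by
    have h1 : ∑ v : Fin (a*b), ∑ w, A 0 w * A w v = (k:ℝ)*k := by
      rw [Finset.sum_comm]
      have hin : ∀ w : Fin (a*b), ∑ v, A 0 w * A w v = A 0 w * k := by
        intro w; rw [← Finset.mul_sum, hrow w]
      rw [Finset.sum_congr rfl (fun w _ => hin w), ← Finset.sum_mul, hrow 0]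
    have h2 := Finset.sum_congr rfl (fun v (_ : v ∈ Finset.univ) => hA2e 0 v)
    rw [h1, Finset.sum_add_distrib, Finset.sum_add_distrib, ← Finset.mul_sum, ← Finset.mul_sum,
      ← Finset.mul_sum, Finset.sum_sub_distrib, Finset.sum_sub_distrib,
      s1, hrow 0, s3] at h2
    linarith [h2]
  -- identity E2 for M
  have hMrow := pijoin_Mrow a b k ha hb A hrow
  set R : ℝ := (k:ℝ) + (a:ℝ)*(b:ℝ) with hR
  set p0 : Fin (1*a+1) × Fin (a*b) := ((0 : Fin (1*a+1)), (0 : Fin (a*b))) with hp0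
  have hM2q : ∀ q, ∑ r, Mjoin a b 1 A p0 r * Mjoin a b 1 A r q
      = (ttil:ℝ) * (if p0 = q then 1 else 0) + (ltil:ℝ) * Mjoin a b 1 A p0 q
        + (mtil:ℝ) * (1 - (if p0 = q then 1 else 0) - Mjoin a b 1 A p0 q) := by
    intro q
    have h := congrFun (congrFun hM2 p0) q
    simpa [Matrix.mul_apply, Matrix.one_apply, Jbig, Matrix.sub_apply, Matrix.add_apply,
      Matrix.smul_apply, smul_eq_mul] using h
  have t1 : ∑ q : Fin (1*a+1) × Fin (a*b), (if p0 = q then (1:ℝ) else 0) = 1 := by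
    rw [Finset.sum_ite_eq]; simp
  have t3 : ∑ _q : Fin (1*a+1) × Fin (a*b), (1:ℝ) = (((1*a+1)*(a*b) : ℕ) : ℝ) := by
    simp [Finset.card_univ, mul_comm]
  have E2 : R*R = (ttil:ℝ) + ltil*R + mtil*((((1*a+1)*(a*b):ℕ):ℝ) - 1 - R) := by
    have h1 : ∑ q : Fin (1*a+1) × Fin (a*b), ∑ r, Mjoin a b 1 A p0 r * Mjoin a b 1 A r q
        = R*R := by
      rw [Finset.sum_comm]
      have hin : ∀ r, ∑ q, Mjoin a b 1 A p0 r * Mjoin a b 1 A r q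
          = Mjoin a b 1 A p0 r * R := by
        intro r; rw [← Finset.mul_sum, hMrow r]
      rw [Finset.sum_congr rfl (fun r _ => hin r), ← Finset.sum_mul, hMrow p0]
    have h2 := Finset.sum_congr rfl
      (fun q (_ : q ∈ Finset.univ) => hM2q q)
    rw [h1, Finset.sum_add_distrib, Finset.sum_add_distrib, ← Finset.mul_sum, ← Finset.mul_sum,
      ← Finset.mul_sum, Finset.sum_sub_distrib, Finset.sum_sub_distrib,
      t1, hMrow p0, t3] at h2
    linarith [h2]
  -- combine
  rw [← htt, ← hll, ← hmm] at E2
  have hab : (a:ℝ)*(b:ℝ) ≠ 0 := by positivity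
  have hmain : (a:ℝ)*(b:ℝ) * (2*(k:ℝ) + m - l) = (a:ℝ)*(b:ℝ) * ((a:ℝ)*m + b) := by
    have hc1 : ((a*b : ℕ) : ℝ) = (a:ℝ)*(b:ℝ) := by push_cast; ring
    have hc2 : (((1*a+1)*(a*b) : ℕ) : ℝ) = (1*(a:ℝ)+1)*((a:ℝ)*(b:ℝ)) := by push_cast; ring
    rw [hc1] at E1
    rw [hc2] at E2
    rw [hR] at E2
    linear_combination E2 - E1
  exact mul_left_cancel₀ hab hmain
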